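/- Let r₁,…,r_m be holomorphic on a half-plane ℂ_ν̄ = {Re z > -ν̄}, continuous, with no common zero in ℂ_ν̄, and suppose r_m = δ + N̂ where δ is holomorphic with inf_{ℂ_ν̄}|δ| ≥ η > 0 on ℂ_ν̄ and N̂(z_k) → 0 along every sequence z_k ∈ ℂ_ν with |z_k| → ∞ (for each 0 < ν < ν̄). Then for every 0 < ν < ν̄: inf_{z ∈ ℂ_ν} Σ_{j=1}^m |r_j(z)| > 0. -/
import Mathlib


open Filter

/-- If `r₁,…,r_{m+1}` are holomorphic on the half-plane `{Re z > -ν̄}` with no common zero,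
and the last one decomposes as `r_{m+1} = δ + N̂` with `|δ| ≥ η > 0` on the half-plane and
`N̂` vanishing at infinity in every smaller half-plane, then for each `0 < ν < ν̄` the sum
`Σ_j |r_j|` is bounded away from zero on `{Re z > -ν}`. -/
theorem minors_bounded_below (m : ℕ) (νb η : ℝ) (hνb : 0 < νb) (hη : 0 < η)
    (r : Fin (m+1) → ℂ → ℂ)
    (hr : ∀ j, DifferentiableOn ℂ (r j) {s : ℂ | -νb < s.re})
    (hnz : ∀ s : ℂ, -νb < s.re → ∃ j, r j s ≠ 0)
    (δ Nh : ℂ → ℂ)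
    (hδdiff : DifferentiableOn ℂ δ {s : ℂ | -νb < s.re})
    (hδ : ∀ s : ℂ, -νb < s.re → η ≤ ‖δ s‖)
    (hsplit : ∀ s : ℂ, -νb < s.re → r (Fin.last m) s = δ s + Nh s)
    (hdecay : ∀ ν : ℝ, 0 < ν → ν < νb → ∀ w : ℕ → ℂ, (∀ k, -ν < (w k).re) →
      Tendsto (fun k => ‖w k‖) atTop atTop →
      Tendsto (fun k => Nh (w k)) atTop (nhds 0)) :
    ∀ ν : ℝ, 0 < ν → ν < νb → ∃ c, 0 < c ∧ ∀ s : ℂ, -ν < s.re → c ≤ ∑ j, ‖r j s‖ := by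
  intro ν hν hννb
  -- Step 1: find R₀ such that ‖Nh s‖ ≤ η/2 whenever Re s > -ν and ‖s‖ > R₀.
  have hR : ∃ R₀ : ℝ, ∀ s : ℂ, -ν < s.re → R₀ < ‖s‖ → ‖Nh s‖ ≤ η / 2 := by
    by_contra h
    push_neg at h
    choose w hw1 hw2 hw3 using fun n : ℕ => h n
    have hwt : Tendsto (fun n => ‖w n‖) atTop atTop :=
      tendsto_atTop_mono (fun n => (hw2 n).le) tendsto_natCast_atTop_atTop
    have h0 := hdecay ν hν hννb w hw1 hwt
    have h0' : Tendsto (fun n => ‖Nh (w n)‖) atTop (nhds 0) := by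
      simpa using h0.norm
    have := (h0'.eventually (eventually_lt_nhds (half_pos hη))).exists
    obtain ⟨n, hn⟩ := this
    exact absurd (hw3 n) (not_lt.2 hn.le)
  obtain ⟨R₀, hR₀⟩ := hR
  set R : ℝ := max R₀ 1 with hRdef
  -- The compact set
  set K : Set ℂ := {s : ℂ | -ν ≤ s.re} ∩ Metric.closedBall 0 R with hKdef
  have hKsub : K ⊆ {s : ℂ | -νb < s.re} := by
    intro s hs
    have : -νb < -ν := by linarith
    exact lt_of_lt_of_le this hs.1
  have hKc : IsCompact K := by
    apply Metric.isCompact_of_isClosed_isBounded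
    · exact (isClosed_le continuous_const Complex.continuous_re).inter
        Metric.isClosed_closedBall
    · exact Metric.isBounded_closedBall.subset Set.inter_subset_right
  have hKne : K.Nonempty := by
    refine ⟨(R : ℂ), ?_, ?_⟩
    · simp only [Set.mem_setOf_eq]
      have : (0:ℝ) ≤ R := le_trans zero_le_one (le_max_right _ _)
      simpa using by linarith
    · simp only [Metric.mem_closedBall, dist_zero_right, Complex.norm_real]
      exact le_of_eq (abs_of_nonneg (le_trans zero_le_one (le_max_right _ _)))
  -- continuity of the sum of norms
  have hf : ContinuousOn (fun s => ∑ j, ‖r j s‖) K := by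
    apply continuousOn_finset_sum
    intro j _
    exact (((hr j).continuousOn).mono hKsub).norm
  obtain ⟨z, hzK, hzmin⟩ := hKc.exists_isMinOn hKne hf
  have hzre : -νb < z.re := hKsub hzK
  have hc0 : 0 < ∑ j, ‖r j z‖ := by
    obtain ⟨j, hj⟩ := hnz z hzre
    have h1 : 0 < ‖r j z‖ := norm_pos_iff.2 hj
    have h2 : ‖r j z‖ ≤ ∑ j, ‖r j z‖ :=
      Finset.single_le_sum (f := fun i => ‖r i z‖) (fun i _ => norm_nonneg _) (Finset.mem_univ j)
    linarith
  refine ⟨min (∑ j, ‖r j z‖) (η / 2), lt_min hc0 (half_pos hη), ?_⟩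
  intro s hs
  by_cases hsR : ‖s‖ ≤ R
  · have hsK : s ∈ K := ⟨hs.le, by simpa [Metric.mem_closedBall, dist_zero_right] using hsR⟩
    exact le_trans (min_le_left _ _) (hzmin hsK)
  · push_neg at hsR
    have hsre : -νb < s.re := lt_trans (by linarith) hs
    have hNh : ‖Nh s‖ ≤ η / 2 :=
      hR₀ s hs (lt_of_le_of_lt (le_max_left _ _) hsR)
    have hlast : η / 2 ≤ ‖r (Fin.last m) s‖ := by
      rw [hsplit s hsre]
      have := hδ s hsre
      calc η / 2 = η - η / 2 := by ring
        _ ≤ ‖δ s‖ - ‖Nh s‖ := by linarith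
        _ ≤ ‖δ s + Nh s‖ := by
            have := norm_sub_le (δ s + Nh s) (Nh s)
            simp only [add_sub_cancel_right] at this
            linarith
    refine le_trans (min_le_right _ _) (le_trans hlast ?_)
    exact Finset.single_le_sum (f := fun i => ‖r i s‖) (fun i _ => norm_nonneg _)
      (Finset.mem_univ _)
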